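/- arXiv:1206.1735 — 3 statements merged into one kernel-verified Lean document; each statement's English description precedes it below -/
import Mathlib

section
/- Let A ⊆ B be positive affine semigroups in ℕ^m with C(A) = C(B).ated Then every coset of G(A) in G(B) contains an element of B; equivalently, the image of B in the finite group G(B)/G(A) is the whole group. -/
open scoped BigOperators

/-- The coordinatewise cast `ℕ^m → ℤ^m`. -/
def ntz {m : ℕ} (x : Fin m → ℕ) : Fin m → ℤ := fun i => (x i : ℤ)

/-- The coordinatewise cast `ℕ^m → ℚ^m`. -/
def ntq {m : ℕ} (x : Fin m → ℕ) : Fin m → ℚ := fun i => (x i : ℚ)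

/-- `G(S)`: the subgroup of `ℤ^m` generated by an affine semigroup `S ⊆ ℕ^m`. -/
def grp {m : ℕ} (S : AddSubmonoid (Fin m → ℕ)) : AddSubgroup (Fin m → ℤ) :=
  AddSubgroup.closure (ntz '' (S : Set (Fin m → ℕ)))

/-- `C(S)`: the cone in `ℚ^m` generated by `S`, i.e. all nonnegative rational
linear combinations of elements of `S`. -/
def cone {m : ℕ} (S : AddSubmonoid (Fin m → ℕ)) : Set (Fin m → ℚ) :=
  {x | ∃ (n : ℕ) (c : Fin n → ℚ) (v : Fin n → Fin m → ℕ),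
    (∀ i, 0 ≤ c i) ∧ (∀ i, v i ∈ S) ∧ x = ∑ i, c i • ntq (v i)}

/-- `B_A := {x ∈ B : x ∉ B + (A \ {0})}`. -/
def BA {m : ℕ} (A B : AddSubmonoid (Fin m → ℕ)) : Set (Fin m → ℕ) :=
  {x | x ∈ B ∧ ¬ ∃ b ∈ B, ∃ a ∈ A, a ≠ 0 ∧ x = b + a}

lemma ntz_add' {m : ℕ} (x y : Fin m → ℕ) : ntz (x + y) = ntz x + ntz y := by
  funext i; simp [ntz]

lemma ntz_nsmul' {m : ℕ} (k : ℕ) (x : Fin m → ℕ) : ntz (k • x) = (k : ℤ) • ntz x := by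
  funext i; simp [ntz, mul_comm]

lemma mem_grp_iff' {m : ℕ} (S : AddSubmonoid (Fin m → ℕ)) (x : Fin m → ℤ) :
    x ∈ grp S → ∃ b1 ∈ S, ∃ b2 ∈ S, x = ntz b1 - ntz b2 := by
  intro hx
  induction hx using AddSubgroup.closure_induction with
  | mem y hy =>
      obtain ⟨b, hb, rfl⟩ := hy
      exact ⟨b, hb, 0, S.zero_mem, by funext i; simp [ntz]⟩
  | zero => exact ⟨0, S.zero_mem, 0, S.zero_mem, by funext i; simp [ntz]⟩
  | add a b _ _ ha hb =>
      obtain ⟨a1, ha1, a2, ha2, rfl⟩ := ha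
      obtain ⟨b1, hb1, b2, hb2, rfl⟩ := hb
      exact ⟨a1 + b1, S.add_mem ha1 hb1, a2 + b2, S.add_mem ha2 hb2, by
        rw [ntz_add', ntz_add']; ring⟩
  | neg a _ ha =>
      obtain ⟨a1, ha1, a2, ha2, rfl⟩ := ha
      exact ⟨a2, ha2, a1, ha1, by ring⟩

lemma exists_pos_nsmul_mem' {m : ℕ} (A B : AddSubmonoid (Fin m → ℕ))
    (hcone : cone A = cone B) (b : Fin m → ℕ) (hb : b ∈ B) :
    ∃ k : ℕ, 0 < k ∧ k • b ∈ A := by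
  have hbc : ntq b ∈ cone B := ⟨1, fun _ => 1, fun _ => b, fun _ => zero_le_one,
    fun _ => hb, by simp⟩
  rw [← hcone] at hbc
  obtain ⟨n, c, v, hc, hv, hx⟩ := hbc
  set N : ℕ := ∏ i : Fin n, (c i).den with hN
  have hNpos : 0 < N := Finset.prod_pos (fun i _ => (c i).pos)
  set w : Fin n → ℕ := fun i => (N / (c i).den) * (c i).num.toNat with hw
  have hcast : ∀ i, (w i : ℚ) = (N : ℚ) * c i := by
    intro i
    have hdvd : (c i).den ∣ N := Finset.dvd_prod_of_mem _ (Finset.mem_univ i)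
    have hnum : ((c i).num.toNat : ℚ) = ((c i).num : ℚ) := by
      exact_mod_cast congrArg (Int.cast : ℤ → ℚ)
        (Int.toNat_of_nonneg (Rat.num_nonneg.mpr (hc i)))
    have h1 : ((N / (c i).den : ℕ) : ℚ) = (N : ℚ) / ((c i).den : ℚ) :=
      Nat.cast_div hdvd (by exact_mod_cast (c i).pos.ne')
    calc (w i : ℚ) = ((N / (c i).den : ℕ) : ℚ) * ((c i).num.toNat : ℚ) := by
          rw [hw]; push_cast; ring
      _ = (N : ℚ) / ((c i).den : ℚ) * ((c i).num : ℚ) := by rw [h1, hnum]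
      _ = (N : ℚ) * (((c i).num : ℚ) / ((c i).den : ℚ)) := by ring
      _ = (N : ℚ) * c i := by rw [Rat.num_div_den]
  have key : N • b = ∑ i, w i • v i := by
    funext j
    have hxj : (b j : ℚ) = ∑ i, c i * (v i j : ℚ) := by
      have := congrFun hx j
      simpa [ntq] using this
    have hL : (N • b) j = N * b j := by simp
    have hR : (∑ i, w i • v i) j = ∑ i, w i * v i j := by
      simp [Finset.sum_apply]
    rw [hL, hR]
    have : ((N * b j : ℕ) : ℚ) = ((∑ i, w i * v i j : ℕ) : ℚ) := by
      push_cast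
      rw [hxj, Finset.mul_sum]
      refine Finset.sum_congr rfl (fun i _ => ?_)
      rw [← mul_assoc, ← hcast i]
    exact_mod_cast this
  refine ⟨N, hNpos, ?_⟩
  rw [key]
  exact AddSubmonoid.sum_mem A (fun i _ => AddSubmonoid.nsmul_mem A (hv i) _)

/-- Let `A ⊆ B` be positive affine semigroups in `ℕ^m` with `C(A) = C(B)`.
Then every coset of `G(A)` in `G(B)` contains an element of `B`. -/
theorem stmt4 {m : ℕ} (A B : AddSubmonoid (Fin m → ℕ)) (hAfg : A.FG) (hBfg : B.FG)
    (hAB : A ≤ B) (hcone : cone A = cone B) :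
    ∀ x ∈ grp B, ∃ b ∈ B, ntz b - x ∈ grp A := by
  intro x hx
  obtain ⟨b1, hb1, b2, hb2, rfl⟩ := mem_grp_iff' B x hx
  obtain ⟨k, hk, hkA⟩ := exists_pos_nsmul_mem' A B hcone b2 hb2
  refine ⟨b1 + (k - 1) • b2, B.add_mem hb1 (AddSubmonoid.nsmul_mem B hb2 _), ?_⟩
  have : ntz (b1 + (k - 1) • b2) - (ntz b1 - ntz b2) = ntz (k • b2) := by
    rw [ntz_add', ntz_nsmul', ntz_nsmul']
    have : ((k - 1 : ℕ) : ℤ) = (k : ℤ) - 1 := by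
      omega
    rw [this]
    module
  rw [this]
  exact AddSubgroup.subset_closure ⟨k • b2, hkA, rfl⟩
end

section
/- Let A ⊆ B be positive affine semigroups in ℕ^m with C(A) = C(B). Then the set B_A := {x ∈ B : x ∉ B + (A ∖ {0})} is finite. -/
open scoped BigOperators

lemma ntq_mem_cone {m : ℕ} (S : AddSubmonoid (Fin m → ℕ)) {g : Fin m → ℕ} (hg : g ∈ S) :
    ntq g ∈ cone S := by
  refine ⟨1, fun _ => 1, fun _ => g, fun _ => zero_le_one, fun _ => hg, by simp⟩

lemma exists_pos_nsmul_mem {m : ℕ} (A : AddSubmonoid (Fin m → ℕ)) {g : Fin m → ℕ}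
    (hg : ntq g ∈ cone A) : ∃ N : ℕ, 0 < N ∧ N • g ∈ A := by
  obtain ⟨n, c, v, hc, hv, heq⟩ := hg
  set D : ℕ := ∏ i, (c i).den with hD
  have hDpos : 0 < D := Finset.prod_pos fun i _ => (c i).pos
  set e : Fin n → ℕ := fun i => (c i).num.toNat * (D / (c i).den) with he
  have key : ∀ i, ((e i : ℚ)) = D * c i := by
    intro i
    have hd : (c i).den ∣ D := Finset.dvd_prod_of_mem _ (Finset.mem_univ i)
    have h1 : ((D / (c i).den : ℕ) : ℚ) = (D : ℚ) / ((c i).den : ℚ) := by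
      rw [Nat.cast_div hd (by exact_mod_cast (c i).den_nz)]
    have h2 : (((c i).num.toNat : ℤ) : ℚ) = ((c i).num : ℚ) := by
      rw [Int.toNat_of_nonneg (Rat.num_nonneg.2 (hc i))]
    push_cast [he, h1]
    rw [show (((c i).num.toNat :ℚ)) = ((c i).num : ℚ) by exact_mod_cast h2]
    have hden : ((c i).den : ℚ) ≠ 0 := Nat.cast_ne_zero.2 (c i).den_nz
    have h3 := Rat.num_div_den (c i)
    rw [div_eq_iff hden] at h3
    field_simp
    rw [h3]; ring
  refine ⟨D, hDpos, ?_⟩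
  have hrep : D • g = ∑ i, e i • v i := by
    funext j
    have hj : (g j : ℚ) = ∑ i, c i * (v i j : ℚ) := by
      have := congrFun heq j
      simpa [ntq, Finset.sum_apply] using this
    have : ((D * g j : ℕ) : ℚ) = ((∑ i, e i * v i j : ℕ) : ℚ) := by
      push_cast
      rw [hj, Finset.mul_sum]
      refine Finset.sum_congr rfl fun i _ => ?_
      rw [key i]; ring
    have : D * g j = ∑ i, e i * v i j := by exact_mod_cast this
    simpa [Finset.sum_apply, Pi.smul_apply, smul_eq_mul] using this
  rw [hrep]
  exact AddSubmonoid.sum_mem _ fun i _ => AddSubmonoid.nsmul_mem _ (hv i) _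

lemma mem_closure_rep {m : ℕ} (s : Finset (Fin m → ℕ)) {x : Fin m → ℕ}
    (hx : x ∈ AddSubmonoid.closure (s : Set (Fin m → ℕ))) :
    ∃ e : {g // g ∈ s} → ℕ, x = ∑ g ∈ s.attach, e g • (g : Fin m → ℕ) := by
  induction hx using AddSubmonoid.closure_induction with
  | mem g hg =>
      refine ⟨fun h => if h = ⟨g, hg⟩ then 1 else 0, ?_⟩
      simp only [ite_smul, zero_smul, one_smul]
      rw [Finset.sum_ite_eq' s.attach (⟨g, hg⟩ : {g // g ∈ s}) (fun h => (h:Fin m → ℕ))]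
      simp
  | zero => exact ⟨0, by simp⟩
  | add x y hx hy ihx ihy =>
      obtain ⟨e1, h1⟩ := ihx
      obtain ⟨e2, h2⟩ := ihy
      exact ⟨e1 + e2, by simp [h1, h2, add_smul, Finset.sum_add_distrib]⟩

lemma sum_split {m : ℕ} (s : Finset (Fin m → ℕ)) (e : {g // g ∈ s} → ℕ) (g : {g // g ∈ s})
    (N : ℕ) (hN : N ≤ e g) :
    ∑ h ∈ s.attach, e h • (h : Fin m → ℕ)
      = (∑ h ∈ s.attach, (Function.update e g (e g - N)) h • (h : Fin m → ℕ))
        + N • (g : Fin m → ℕ) := by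
  classical
  rw [Finset.sum_eq_sum_sdiff_singleton_add (s.mem_attach g) (fun h => e h • (h : Fin m → ℕ)),
    Finset.sum_eq_sum_sdiff_singleton_add (s.mem_attach g)
      (fun h => (Function.update e g (e g - N)) h • (h : Fin m → ℕ))]
  have h1 : ∀ h ∈ s.attach \ {g}, (Function.update e g (e g - N)) h • (h : Fin m → ℕ)
      = e h • (h : Fin m → ℕ) := by
    intro h hh
    rw [Function.update_of_ne (by simpa using (Finset.mem_sdiff.1 hh).2)]
  rw [Finset.sum_congr rfl h1, Function.update_self, add_assoc, ← add_smul,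
    Nat.sub_add_cancel hN]

set_option linter.unusedVariables false in
/-- Let `A ⊆ B` be positive affine semigroups in `ℕ^m` with `C(A) = C(B)`.
Then the set `B_A := {x ∈ B : x ∉ B + (A \ {0})}` is finite. -/
theorem stmt5 {m : ℕ} (A B : AddSubmonoid (Fin m → ℕ)) (hAfg : A.FG) (hBfg : B.FG)
    (hAB : A ≤ B) (hcone : cone A = cone B) :
    (BA A B).Finite := by
  classical
  obtain ⟨s, hs⟩ := hBfg
  have hgen : ∀ g : {g // g ∈ s}, ∃ N : ℕ, 0 < N ∧ N • (g : Fin m → ℕ) ∈ A := by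
    intro g
    apply exists_pos_nsmul_mem
    rw [hcone]
    exact ntq_mem_cone B (hs ▸ AddSubmonoid.subset_closure g.2)
  choose N hNpos hNA using hgen
  set F : ({g // g ∈ s} → ℕ) → (Fin m → ℕ) :=
    fun e => ∑ g ∈ s.attach, e g • (g : Fin m → ℕ) with hF
  have hfin : (F '' (Set.univ.pi fun g => Set.Iic (N g))).Finite :=
    (Set.Finite.pi fun g => Set.finite_Iic (N g)).image F
  refine hfin.subset ?_
  rintro x ⟨hxB, hxdec⟩
  rw [← hs] at hxB
  obtain ⟨e, hex⟩ := mem_closure_rep s hxB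
  have hFmem : ∀ e' : {g // g ∈ s} → ℕ, F e' ∈ B := by
    intro e'
    rw [← hs]
    exact AddSubmonoid.sum_mem _ fun g _ =>
      AddSubmonoid.nsmul_mem _ (AddSubmonoid.subset_closure g.2) _
  have hbound : ∀ g : {g // g ∈ s}, (g : Fin m → ℕ) ≠ 0 → e g ≤ N g := by
    intro g hg0
    by_contra h
    push_neg at h
    apply hxdec
    refine ⟨F (Function.update e g (e g - N g)), hFmem _, N g • (g : Fin m → ℕ), hNA g, ?_, ?_⟩
    · intro hz
      apply hg0
      funext i
      have := congrFun hz i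
      simp only [Pi.smul_apply, smul_eq_mul, Pi.zero_apply, Nat.mul_eq_zero] at this
      rcases this with h' | h'
      · exact absurd h' (hNpos g).ne'
      · simpa using h'
    · exact hex.trans (sum_split s e g (N g) h.le)
  refine ⟨fun g => if (g : Fin m → ℕ) = 0 then 0 else e g, ?_, ?_⟩
  · intro g _
    by_cases h : (g : Fin m → ℕ) = 0 <;> simp [h, hbound g]
  · rw [hF]
    simp only
    rw [hex]
    refine (Finset.sum_congr rfl fun g _ => ?_).symm
    by_cases h : (g : Fin m → ℕ) = 0 <;> simp [h]
end

section
/- Let B ⊆ ℕ^m be a positive affine semigroup such that C(B) is generated by linearly independent elements e_1,…,e_d ∈ B, and let A be the submonoid of B generated by e_1,…,e_d. For x ∈ C(B) write x = Σ_{i=1}^d λ_i(x) e_i with λ_i(x) ∈ ℚ≥0. Then B is normal, i.e., B = G(B) ∩ C(B), if and only if every x ∈ B_A satisfies λ_i(x) < 1 for all i = 1,…,d. -/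
open scoped BigOperators

-- ===== auxiliary lemmas =====

lemma ntq_add {m : ℕ} (a b : Fin m → ℕ) : ntq (a + b) = ntq a + ntq b := by
  funext j; simp [ntq]

lemma ntq_zero {m : ℕ} : ntq (0 : Fin m → ℕ) = 0 := by
  funext j; simp [ntq]

lemma ntq_smul {m : ℕ} (n : ℕ) (a : Fin m → ℕ) : ntq (n • a) = (n : ℚ) • ntq a := by
  funext j; simp [ntq]

lemma ntq_sum {m n : ℕ} (f : Fin n → Fin m → ℕ) : ntq (∑ i, f i) = ∑ i, ntq (f i) := by
  funext j
  simp [ntq, Finset.sum_apply]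

lemma ntq_inj {m : ℕ} : Function.Injective (ntq (m := m)) := by
  intro a b h
  funext j
  exact Nat.cast_injective (congrFun h j)

lemma mem_cone_of_mem {m : ℕ} {S : AddSubmonoid (Fin m → ℕ)} {b : Fin m → ℕ} (hb : b ∈ S) :
    ntq b ∈ cone S :=
  ⟨1, fun _ => 1, fun _ => b, fun _ => zero_le_one, fun _ => hb, by simp⟩

lemma grp_diff {m : ℕ} {S : AddSubmonoid (Fin m → ℕ)} {g : Fin m → ℤ} (hg : g ∈ grp S) :
    ∃ p ∈ S, ∃ q ∈ S, g = ntz p - ntz q := by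
  refine AddSubgroup.closure_induction
    (p := fun g _ => ∃ p ∈ S, ∃ q ∈ S, g = ntz p - ntz q) ?_ ?_ ?_ ?_ hg
  · rintro _ ⟨p, hp, rfl⟩
    exact ⟨p, hp, 0, S.zero_mem, by funext j; simp [ntz]⟩
  · exact ⟨0, S.zero_mem, 0, S.zero_mem, by simp⟩
  · rintro _ _ _ _ ⟨p, hp, q, hq, rfl⟩ ⟨p', hp', q', hq', rfl⟩
    refine ⟨p + p', S.add_mem hp hp', q + q', S.add_mem hq hq', ?_⟩
    funext j; simp [ntz]; ring
  · rintro _ _ ⟨p, hp, q, hq, rfl⟩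
    exact ⟨q, hq, p, hp, by abel⟩

lemma coords_unique {m d : ℕ} {e : Fin d → Fin m → ℕ}
    (hli : LinearIndependent ℚ (fun k => ntq (e k))) {c c' : Fin d → ℚ}
    (h : ∑ i, c i • ntq (e i) = ∑ i, c' i • ntq (e i)) : ∀ i, c i = c' i := by
  have h0 : ∑ i, (c - c') i • ntq (e i) = 0 := by
    simp [sub_smul, Finset.sum_sub_distrib, h]
  have := Fintype.linearIndependent_iff.mp hli (c - c') h0
  intro i
  have hi := this i
  simpa [sub_eq_zero] using hi

lemma decomp {m : ℕ} (A B : AddSubmonoid (Fin m → ℕ)) :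
    ∀ b ∈ B, ∃ u ∈ BA A B, ∃ a ∈ A, b = u + a := by
  suffices H : ∀ n : ℕ, ∀ b, (∑ j, b j) = n → b ∈ B → ∃ u ∈ BA A B, ∃ a ∈ A, b = u + a by
    intro b hb; exact H _ b rfl hb
  intro n
  induction n using Nat.strong_induction_on with
  | _ n ih =>
    intro b hbn hb
    by_cases hBA : b ∈ BA A B
    · exact ⟨b, hBA, 0, A.zero_mem, (add_zero b).symm⟩
    · have hex : ∃ b' ∈ B, ∃ a ∈ A, a ≠ 0 ∧ b = b' + a := by
        by_contra hcon
        exact hBA ⟨hb, hcon⟩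
      obtain ⟨b', hb', a, ha, ha0, rfl⟩ := hex
      have hpos : 0 < ∑ j, a j := by
        rcases Function.ne_iff.mp ha0 with ⟨j, hj⟩
        exact Finset.sum_pos' (fun _ _ => Nat.zero_le _)
          ⟨j, Finset.mem_univ j, Nat.pos_of_ne_zero (by simpa using hj)⟩
      have hlt : (∑ j, b' j) < n := by
        subst hbn
        calc ∑ j, b' j < ∑ j, b' j + ∑ j, a j := by omega
        _ = ∑ j, (b' + a) j := by rw [← Finset.sum_add_distrib]; rfl
      obtain ⟨u, hu, a', ha', rfl⟩ := ih _ hlt b' rfl hb'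
      exact ⟨u, hu, a' + a, A.add_mem ha' ha, by abel⟩

lemma A_coords {m d : ℕ} (e : Fin d → Fin m → ℕ) :
    ∀ a ∈ AddSubmonoid.closure (Set.range e), ∃ n : Fin d → ℕ,
      ntq a = ∑ i, (n i : ℚ) • ntq (e i) := by
  intro a ha
  refine AddSubmonoid.closure_induction
    (motive := fun a _ => ∃ n : Fin d → ℕ, ntq a = ∑ i, (n i : ℚ) • ntq (e i)) ?_ ?_ ?_ ha
  · rintro _ ⟨k, rfl⟩
    refine ⟨fun i => if i = k then 1 else 0, ?_⟩
    simp [apply_ite, ite_smul, Finset.sum_ite_eq']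
  · exact ⟨0, by simp [ntq_zero]⟩
  · rintro x y _ _ ⟨n, hn⟩ ⟨n', hn'⟩
    refine ⟨n + n', ?_⟩
    rw [ntq_add, hn, hn', ← Finset.sum_add_distrib]
    refine Finset.sum_congr rfl fun i _ => ?_
    simp only [Pi.add_apply, Nat.cast_add, add_smul]

lemma exists_nat_mul {r : ℚ} (hr : 0 ≤ r) : ∃ n : ℕ, (r.den : ℚ) * r = n := by
  refine ⟨r.num.toNat, ?_⟩
  rw [mul_comm, Rat.mul_den_eq_num]
  have h := Int.toNat_of_nonneg (Rat.num_nonneg.mpr hr)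
  exact_mod_cast h.symm

/-- Let `B ⊆ ℕ^m` be a positive affine semigroup such that `C(B)` is
generated by linearly independent `e₁,…,e_d ∈ B`, and let `A` be the submonoid of `B`
generated by the `e_k`.  For `x ∈ C(B)` write `x = Σ_i λ_i(x) e_i` with
`λ_i(x) ∈ ℚ≥0`.  Then `B` is normal, i.e. `B = G(B) ∩ C(B)`, if and only if every
`x ∈ B_A` satisfies `λ_i(x) < 1` for all `i`. -/
theorem stmt14 {m d : ℕ} (B : AddSubmonoid (Fin m → ℕ)) (hBfg : B.FG)
    (e : Fin d → Fin m → ℕ) (he : ∀ k, e k ∈ B)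
    (hli : LinearIndependent ℚ (fun k => ntq (e k)))
    (A : AddSubmonoid (Fin m → ℕ)) (hA : A = AddSubmonoid.closure (Set.range e))
    (hcone : cone B = cone A)
    (lam : (Fin m → ℕ) → Fin d → ℚ)
    (hlam : ∀ x : Fin m → ℕ, ntq x ∈ cone B →
      (∀ i, 0 ≤ lam x i) ∧ ntq x = ∑ i, lam x i • ntq (e i)) :
    (∀ x : Fin m → ℕ, ntz x ∈ grp B → ntq x ∈ cone B → x ∈ B) ↔
      ∀ x ∈ BA A B, ∀ i, lam x i < 1 := by
  have hAB : A ≤ B := by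
    rw [hA]
    exact AddSubmonoid.closure_le.mpr (by rintro _ ⟨k, rfl⟩; exact he k)
  have heA : ∀ k, e k ∈ A := by
    intro k; rw [hA]; exact AddSubmonoid.subset_closure ⟨k, rfl⟩
  have hene : ∀ k, e k ≠ 0 := by
    intro k hk
    exact hli.ne_zero k (by rw [hk, ntq_zero])
  constructor
  · -- normal → box condition
    intro hnorm x hx i
    by_contra hge
    push_neg at hge
    obtain ⟨hxB, hxnd⟩ := hx
    obtain ⟨hpos, hrep⟩ := hlam x (mem_cone_of_mem hxB)
    set c : Fin d → ℚ := fun j => lam x j - (if j = i then 1 else 0) with hc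
    have hcpos : ∀ j, 0 ≤ c j := by
      intro j
      by_cases h : j = i
      · subst h; simpa [hc] using hge
      · simpa [hc, h] using hpos j
    have hsum : ntq x = ntq (e i) + ∑ j, c j • ntq (e j) := by
      rw [hrep]
      simp only [hc, sub_smul, ite_smul, one_smul, zero_smul, Finset.sum_sub_distrib,
        Finset.sum_ite_eq', Finset.mem_univ, if_true]
      abel
    have hle : ∀ j, e i j ≤ x j := by
      intro j
      have h1 := congrFun hsum j
      have h2 : (0:ℚ) ≤ ∑ k, (c k • ntq (e k)) j := by
        refine Finset.sum_nonneg fun k _ => ?_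
        have : (0:ℚ) ≤ (e k j : ℚ) := Nat.cast_nonneg _
        simpa [ntq] using mul_nonneg (hcpos k) this
      have h3 : (e i j : ℚ) ≤ (x j : ℚ) := by
        simp only [ntq, Pi.add_apply, Finset.sum_apply] at h1
        linarith
      exact_mod_cast h3
    set y : Fin m → ℕ := fun j => x j - e i j with hy
    have hxy : x = y + e i := by
      funext j
      simp only [hy, Pi.add_apply]
      have := hle j
      omega
    have hyg : ntz y ∈ grp B := by
      have hxg : ntz x ∈ grp B := AddSubgroup.subset_closure ⟨x, hxB, rfl⟩
      have heg : ntz (e i) ∈ grp B := AddSubgroup.subset_closure ⟨e i, he i, rfl⟩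
      have : ntz y = ntz x - ntz (e i) := by
        funext j
        simp only [ntz, hy, Pi.sub_apply]
        have := hle j
        omega
      rw [this]
      exact sub_mem hxg heg
    have hyc : ntq y ∈ cone B := by
      refine ⟨d, c, e, hcpos, he, ?_⟩
      have : ntq y = ntq x - ntq (e i) := by
        funext j
        simp only [ntq, hy, Pi.sub_apply]
        have := hle j
        push_cast [Nat.cast_sub this]
        ring
      rw [this, hsum]
      abel
    have hyB : y ∈ B := hnorm y hyg hyc
    exact hxnd ⟨y, hyB, e i, heA i, hene i, hxy⟩
  · -- box condition → normal
    intro hbox x hgx hcx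
    obtain ⟨p, hp, q, hq, hpq⟩ := grp_diff hgx
    have hxqp : x + q = p := by
      apply ntq_inj
      funext j
      have h := congrFun hpq j
      simp only [ntz, Pi.sub_apply] at h
      simp only [ntq, ntq_add, Pi.add_apply]
      push_cast
      have : (x j : ℤ) = (p j : ℤ) - q j := h
      have h2 : (x j : ℤ) + q j = p j := by omega
      exact_mod_cast congrArg (fun z : ℤ => (z : ℚ)) h2
    obtain ⟨hqpos, hqrep⟩ := hlam q (mem_cone_of_mem hq)
    set N : ℕ := ∏ j, (lam q j).den with hN
    have hNpos : 0 < N := Finset.prod_pos fun j _ => (lam q j).pos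
    have hNi : ∀ i, ∃ n : ℕ, (N : ℚ) * lam q i = n := by
      intro i
      obtain ⟨n, hn⟩ := exists_nat_mul (hqpos i)
      refine ⟨(∏ j ∈ Finset.univ.erase i, (lam q j).den) * n, ?_⟩
      have hsplit : (N : ℚ) = ((lam q i).den : ℚ) * ∏ j ∈ Finset.univ.erase i, ((lam q j).den : ℚ) := by
        rw [hN, ← Finset.mul_prod_erase Finset.univ (fun j => (lam q j).den) (Finset.mem_univ i)]
        push_cast
        ring
      rw [hsplit]
      push_cast
      rw [mul_comm (((lam q i).den : ℚ)), mul_assoc, hn]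
    choose n hn using hNi
    set b : Fin m → ℕ := x + N • q with hb
    have hbB : b ∈ B := by
      have hsplitq : N • q = q + (N - 1) • q := by
        have h1 : N = 1 + (N - 1) := by omega
        nth_rewrite 1 [h1]
        rw [add_smul, one_smul]
      have : b = p + (N - 1) • q := by
        rw [hb, hsplitq, ← hxqp]
        abel
      rw [this]
      exact B.add_mem hp (AddSubmonoid.nsmul_mem B hq _)
    obtain ⟨u, huBA, a', ha', hbu⟩ := decomp A B b hbB
    obtain ⟨hupos, hurep⟩ := hlam u (mem_cone_of_mem huBA.1)
    have hubox : ∀ i, lam u i < 1 := hbox u huBA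
    obtain ⟨n', hn'⟩ := A_coords e a' (by rw [← hA]; exact ha')
    obtain ⟨hxpos, hxrep⟩ := hlam x hcx
    -- key coordinate identity
    have hkey : ∀ i, lam x i + n i = lam u i + n' i := by
      have hbq : ntq b = ∑ i, (lam x i + n i) • ntq (e i) := by
        rw [hb, ntq_add, ntq_smul, hxrep, hqrep, Finset.smul_sum]
        rw [← Finset.sum_add_distrib]
        refine Finset.sum_congr rfl fun i _ => ?_
        rw [smul_smul, ← hn i, add_smul]
      have hbu' : ntq b = ∑ i, (lam u i + n' i) • ntq (e i) := by
        rw [hbu, ntq_add, hurep, hn', ← Finset.sum_add_distrib]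
        refine Finset.sum_congr rfl fun i _ => ?_
        rw [add_smul]
      exact coords_unique hli (hbq.symm.trans hbu')
    have hnle : ∀ i, n i ≤ n' i := by
      intro i
      have h1 := hkey i
      have h2 : (n i : ℚ) < (n' i : ℚ) + 1 := by
        have := hxpos i
        have := hubox i
        linarith
      exact_mod_cast Nat.lt_succ_iff.mp (by exact_mod_cast h2)
    set k : Fin d → ℕ := fun i => n' i - n i with hk
    have hxeq : x = u + ∑ i, k i • e i := by
      apply ntq_inj
      rw [ntq_add, hxrep, hurep]
      have hsum2 : ntq (∑ i, k i • e i) = ∑ i, (k i : ℚ) • ntq (e i) := by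
        rw [ntq_sum]
        exact Finset.sum_congr rfl fun i _ => ntq_smul _ _
      rw [hsum2, ← Finset.sum_add_distrib]
      refine Finset.sum_congr rfl fun i _ => ?_
      rw [← add_smul]
      congr 1
      have hki : (k i : ℚ) = (n' i : ℚ) - n i := by
        rw [hk]
        push_cast [Nat.cast_sub (hnle i)]
        ring
      have := hkey i
      rw [hki]
      linarith
    rw [hxeq]
    exact B.add_mem huBA.1 (hAB (A.sum_mem fun i _ => AddSubmonoid.nsmul_mem A (heA i) _))
end
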